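/- Let T ∩ 3^ω := { α ∈ 3^ω : every finite prefix of α contains at most as many 2s as 1s }, and let e : T ∩ 3^ω → 2^ω be defined by e(α) := lim_n (α↾n)^↩, where ↩ is the erasing operation (∅^↩ := ∅; (tε)^↩ := t^↩ε for ε ∈ {0,1}; (t2)^↩ := t^↩ with its last 1 replaced by 0) and where t ≺ lim_n s_n iff t is a prefix of s_n for all sufficiently large n. Then e is Σ^0_2-measurable: for every open subset U of 2^ω, the preimage e^{-1}(U) is a countable union of closed subsets of the space T ∩ 3^ω (an F_σ set relative to T ∩ 3^ω). -/

import Mathlib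

open Set Classical

/-- The prefix of length `l` of an infinite word. -/
def wordPrefix {α : Type*} (x : ℕ → α) (l : ℕ) : List α := List.ofFn fun i : Fin l => x i.val

/-- `T ∩ 3^{<ω}`: finite words over `3 = {0,1,2}` all of whose prefixes contain at most as
many `2`s as `1`s. -/
def Tfin : Set (List (Fin 3)) :=
  { s | ∀ l : ℕ, (s.take l).count 2 ≤ (s.take l).count 1 }

/-- `T ∩ 3^ω`: infinite words over `3 = {0,1,2}` all of whose finite prefixes contain at
most as many `2`s as `1`s. -/
def Tinf : Set (ℕ → Fin 3) :=
  { α | ∀ l : ℕ, (wordPrefix α l).count 2 ≤ (wordPrefix α l).count 1 }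

/-- Replace the first occurrence of `1` (i.e. `true`) in a binary word by `0`. -/
def replaceFirstOne : List Bool → List Bool
  | [] => []
  | true :: t => false :: t
  | false :: t => false :: replaceFirstOne t

/-- Replace the last occurrence of `1` (i.e. `true`) in a binary word by `0`. -/
def replaceLastOne (l : List Bool) : List Bool := (replaceFirstOne l.reverse).reverse

/-- One step of the erasing operation: appending a letter `ε ∈ {0,1}` appends it to the
erased word, while appending the letter `2` replaces the last `1` of the erased word by `0`. -/
def eraseStep (acc : List Bool) (a : Fin 3) : List Bool :=
  if a = 2 then replaceLastOne acc else acc ++ [decide (a = 1)]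

/-- The erasing operation `s ↦ s^↩` on finite words over `3 = {0,1,2}` (letters `0`,`1` of
the binary output are encoded as `false`,`true`): `∅^↩ = ∅`, `(tε)^↩ = t^↩ε` for `ε ∈ {0,1}`,
and `(t2)^↩ = t^↩` with its last `1` replaced by `0`. -/
def eraseWord (s : List (Fin 3)) : List Bool := s.foldl eraseStep []

/-- `t` is a (finite) prefix of the infinite word `x`. -/
def InfPrefix {α : Type*} (t : List α) (x : ℕ → α) : Prop :=
  ∀ i : Fin t.length, t.get i = x i.val

/-- The infinite word `x` is the limit of the sequence of finite words `s`: a finite word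
is a prefix of `x` iff it is a prefix of `s m` for all sufficiently large `m`. -/
def IsLimitOf (x : ℕ → Bool) (s : ℕ → List Bool) : Prop :=
  ∀ t : List Bool, InfPrefix t x ↔ ∀ᶠ m in Filter.atTop, t <+: s m

/-- The erasure `e(α) := lim_n (α↾n)^↩` of an infinite word over `3 = {0,1,2}` (an arbitrary
value is returned if the limit does not exist; for `α ∈ T ∩ 3^ω` it always exists). -/
noncomputable def eMap (α : ℕ → Fin 3) : ℕ → Bool :=
  if h : ∃ x : ℕ → Bool, IsLimitOf x (fun m => eraseWord (wordPrefix α m)) then h.choose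
  else fun _ => false

abbrev eSeq (α : ℕ → Fin 3) (m : ℕ) : List Bool := eraseWord (wordPrefix α m)

lemma wordPrefix_succ {β : Type*} (x : ℕ → β) (m : ℕ) :
    wordPrefix x (m + 1) = wordPrefix x m ++ [x m] := by
  rw [wordPrefix, List.ofFn_succ']
  simp [wordPrefix, List.concat_eq_append]

lemma eraseWord_concat (l : List (Fin 3)) (a : Fin 3) :
    eraseWord (l ++ [a]) = eraseStep (eraseWord l) a := by
  simp [eraseWord, List.foldl_append]

lemma eSeq_succ (α : ℕ → Fin 3) (m : ℕ) :
    eSeq α (m + 1) = eraseStep (eSeq α m) (α m) := by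
  rw [eSeq, wordPrefix_succ, eraseWord_concat]

lemma replaceFirstOne_length (l : List Bool) : (replaceFirstOne l).length = l.length := by
  induction l with
  | nil => rfl
  | cons b t ih => cases b <;> simp [replaceFirstOne, ih]

lemma replaceFirstOne_false {l : List Bool} {i : ℕ} (h : l[i]? = some false) :
    (replaceFirstOne l)[i]? = some false := by
  induction l generalizing i with
  | nil => simp at h
  | cons b t ih =>
    cases b
    · cases i with
      | zero => simp [replaceFirstOne]
      | succ j => simpa [replaceFirstOne] using ih (by simpa using h)
    · cases i with
      | zero => simp at h
      | succ j => simpa [replaceFirstOne] using (by simpa using h : t[j]? = some false)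

lemma replaceLastOne_length (l : List Bool) : (replaceLastOne l).length = l.length := by
  simp [replaceLastOne, replaceFirstOne_length]

lemma replaceLastOne_false {l : List Bool} {i : ℕ} (h : l[i]? = some false) :
    (replaceLastOne l)[i]? = some false := by
  obtain ⟨hi, hv⟩ := List.getElem?_eq_some_iff.1 h
  have h1 : l.reverse[l.length - 1 - i]? = some false := by
    rw [List.getElem?_reverse (by omega)]
    have : l.length - 1 - (l.length - 1 - i) = i := by omega
    rw [this, h]
  have h2 := replaceFirstOne_false h1
  rw [replaceLastOne, List.getElem?_reverse]
  · rw [replaceFirstOne_length, List.length_reverse]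
    exact h2
  · rw [replaceFirstOne_length, List.length_reverse]; omega

lemma eraseStep_length_ge (l : List Bool) (a : Fin 3) : l.length ≤ (eraseStep l a).length := by
  rw [eraseStep]; split
  · rw [replaceLastOne_length]
  · simp

lemma eraseStep_false {l : List Bool} {i : ℕ} (a : Fin 3) (h : l[i]? = some false) :
    (eraseStep l a)[i]? = some false := by
  rw [eraseStep]; split
  · exact replaceLastOne_false h
  · obtain ⟨hi, hv⟩ := List.getElem?_eq_some_iff.1 h
    rw [List.getElem?_append_left hi]
    exact h

lemma length_eSeq (α : ℕ → Fin 3) (m : ℕ) :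
    (eSeq α m).length + (wordPrefix α m).count 2 = m := by
  induction m with
  | zero => simp [wordPrefix, eraseWord]
  | succ n ih =>
    rw [eSeq_succ, wordPrefix_succ, List.count_append, eraseStep]
    split
    · rename_i h
      rw [replaceLastOne_length]
      have hc : List.count (2 : Fin 3) [α n] = 1 := by simp [h]
      rw [hc]
      omega
    · rename_i h
      have : ([α n].count (2 : Fin 3)) = 0 := by
        simp [List.count_singleton, h]
      rw [this]
      simp only [List.length_append, List.length_singleton]
      omega

lemma count_one_add_count_two_le (l : List (Fin 3)) : l.count 1 + l.count 2 ≤ l.length := by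
  induction l with
  | nil => simp
  | cons a t ih =>
    simp only [List.count_cons, List.length_cons]
    fin_cases a <;> simp <;> omega

lemma length_eSeq_ge {α : ℕ → Fin 3} (hα : α ∈ Tinf) {L m : ℕ} (hm : 2 * L ≤ m) :
    L ≤ (eSeq α m).length := by
  have h1 := length_eSeq α m
  have h2 := hα m
  have h3 := count_one_add_count_two_le (wordPrefix α m)
  have h4 : (wordPrefix α m).length = m := by simp [wordPrefix]
  omega

lemma eSeq_false_mono {α : ℕ → Fin 3} {i m m' : ℕ} (h : m ≤ m')
    (hf : (eSeq α m)[i]? = some false) : (eSeq α m')[i]? = some false := by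
  induction m', h using Nat.le_induction with
  | base => exact hf
  | succ n hn ih => rw [eSeq_succ]; exact eraseStep_false _ ih

noncomputable def limitWord (α : ℕ → Fin 3) (i : ℕ) : Bool :=
  if ∃ m, (eSeq α m)[i]? = some false then false else true

lemma eventually_eSeq {α : ℕ → Fin 3} (hα : α ∈ Tinf) (i : ℕ) :
    ∀ᶠ m in Filter.atTop, (eSeq α m)[i]? = some (limitWord α i) := by
  rw [limitWord]
  split
  · rename_i h
    obtain ⟨m0, hm0⟩ := h
    filter_upwards [Filter.eventually_ge_atTop m0] with m hm
    exact eSeq_false_mono hm hm0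
  · rename_i h
    filter_upwards [Filter.eventually_ge_atTop (2 * (i + 1))] with m hm
    have hi : i < (eSeq α m).length := length_eSeq_ge hα hm
    cases hv : (eSeq α m)[i]'hi with
    | false => exact absurd ⟨m, List.getElem?_eq_some_iff.2 ⟨hi, hv⟩⟩ h
    | true => exact List.getElem?_eq_some_iff.2 ⟨hi, hv⟩

lemma isLimit {α : ℕ → Fin 3} (hα : α ∈ Tinf) :
    IsLimitOf (limitWord α) (fun m => eraseWord (wordPrefix α m)) := by
  intro t
  constructor
  · intro hp
    have hev : ∀ᶠ m in Filter.atTop,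
        ∀ i : Fin t.length, (eSeq α m)[(i : ℕ)]? = some (limitWord α i) :=
      Filter.eventually_all.2 fun i => eventually_eSeq hα i
    filter_upwards [hev] with m hm
    rw [List.prefix_iff_getElem?]
    intro i hi
    rw [hm ⟨i, hi⟩]
    have := hp ⟨i, hi⟩
    simp only [List.get_eq_getElem] at this
    rw [this]
  · intro hev i
    have h1 := eventually_eSeq hα (i : ℕ)
    have h2 : ∀ᶠ m in Filter.atTop, (eSeq α m)[(i : ℕ)]? = some (t.get i) := by
      filter_upwards [hev] with m hm
      have := List.prefix_iff_getElem?.1 hm i i.isLt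
      simpa using this
    obtain ⟨m, hm1, hm2⟩ := (h1.and h2).exists
    have := hm1.symm.trans hm2
    simpa using this.symm

lemma eMap_prefix_iff {α : ℕ → Fin 3} (hα : α ∈ Tinf) (t : List Bool) :
    InfPrefix t (eMap α) ↔ ∀ᶠ m in Filter.atTop, t <+: eSeq α m := by
  have h : ∃ x : ℕ → Bool, IsLimitOf x (fun m => eraseWord (wordPrefix α m)) :=
    ⟨limitWord α, isLimit hα⟩
  rw [eMap, dif_pos h]
  exact h.choose_spec t

lemma infPrefix_wordPrefix (x : ℕ → Bool) (n : ℕ) : InfPrefix (wordPrefix x n) x := by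
  intro i
  exact List.get_ofFn _ _

lemma infPrefix_wordPrefix_eq {x y : ℕ → Bool} {n : ℕ} (h : InfPrefix (wordPrefix x n) y)
    {a : ℕ} (ha : a < n) : y a = x a := by
  have hl : a < (wordPrefix x n).length := by simpa [wordPrefix] using ha
  have := h ⟨a, hl⟩
  simpa [wordPrefix, List.get_ofFn] using this.symm

lemma cyl_open {U : Set (ℕ → Bool)} (hU : IsOpen U) {x : ℕ → Bool} (hx : x ∈ U) :
    ∃ t : List Bool, InfPrefix t x ∧ ∀ y, InfPrefix t y → y ∈ U := by
  obtain ⟨I, u, hIu, hsub⟩ := isOpen_pi_iff.1 hU x hx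
  refine ⟨wordPrefix x (I.sup id + 1), infPrefix_wordPrefix x _, fun y hy => ?_⟩
  apply hsub
  intro a ha
  have hlt : a < I.sup id + 1 := Nat.lt_succ_of_le (Finset.le_sup (f := id) ha)
  rw [infPrefix_wordPrefix_eq hy hlt]
  exact (hIu a ha).2

lemma isClosed_cond (t : List Bool) (m : ℕ) :
    IsClosed {α : ℕ → Fin 3 | t <+: eSeq α m} := by
  have heq : {α : ℕ → Fin 3 | t <+: eSeq α m} =
      (fun (α : ℕ → Fin 3) (i : Fin m) => α i.val) ⁻¹'
        {g : Fin m → Fin 3 | t <+: eraseWord (List.ofFn g)} := rfl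
  rw [heq]
  exact (isClosed_discrete _).preimage (continuous_pi fun i => continuous_apply _)

/-- The map `e : T ∩ 3^ω → 2^ω`, `e(α) = lim_n (α↾n)^↩`, is `Σ⁰₂`-measurable: the preimage
of every open subset of `2^ω` is a countable union of closed subsets of the subspace
`T ∩ 3^ω` (i.e. an `F_σ` set relative to `T ∩ 3^ω`). -/
theorem eMap_sigma2_measurable (U : Set (ℕ → Bool)) (hU : IsOpen U) :
    ∃ F : ℕ → Set Tinf, (∀ n, IsClosed (F n)) ∧
      (fun α : Tinf => eMap α.val) ⁻¹' U = ⋃ n, F n := by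
  classical
  set s : List Bool → ℕ → Set Tinf :=
    fun t N => {α : Tinf | ∀ m, N ≤ m → t <+: eSeq α.val m} with hs
  have hclosed : ∀ t N, IsClosed (s t N) := by
    intro t N
    have : s t N = ⋂ m, ⋂ (_ : N ≤ m), Subtype.val ⁻¹' {α : ℕ → Fin 3 | t <+: eSeq α m} := by
      ext a; simp [hs]
    rw [this]
    exact isClosed_iInter fun m => isClosed_iInter fun _ =>
      (isClosed_cond t m).preimage continuous_subtype_val
  refine ⟨fun n => match Encodable.decode (α := List Bool × ℕ) n with
    | some (t, N) => if ∀ y, InfPrefix t y → y ∈ U then s t N else ∅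
    | none => ∅, ?_, ?_⟩
  · intro n
    dsimp only
    split
    · split
      · exact hclosed _ _
      · exact isClosed_empty
    · exact isClosed_empty
  · ext α
    simp only [mem_preimage, mem_iUnion]
    constructor
    · intro hmem
      obtain ⟨t, hpt, hcyl⟩ := cyl_open hU hmem
      obtain ⟨N, hN⟩ := Filter.eventually_atTop.1 ((eMap_prefix_iff α.2 t).1 hpt)
      refine ⟨Encodable.encode ((t, N) : List Bool × ℕ), ?_⟩
      simp only [Encodable.encodek]
      rw [if_pos hcyl]
      exact fun m hm => hN m hm
    · rintro ⟨n, hn⟩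
      revert hn
      split
      · rename_i t N heq
        split
        · rename_i hcyl
          intro hmem
          exact hcyl _ ((eMap_prefix_iff α.2 t).2 (Filter.eventually_atTop.2 ⟨N, hmem⟩))
        · intro h; exact absurd h (notMem_empty _)
      · intro h; exact absurd h (notMem_empty _)
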